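/- Let n ≥ 2 and let m₁,…,mₙ be nonnegative integers. Then the iterated integral ∫₀¹ ∫₀^{1−x₁} ⋯ ∫₀^{1−x₁−⋯−x_{n−2}} x₁^{m₁} ⋯ x_{n−1}^{m_{n−1}} (1−x₁−⋯−x_{n−1})^{mₙ} dx_{n−1} ⋯ dx₂ dx₁ equals m₁! ⋯ mₙ! / (m₁+⋯+mₙ+n−1)!. -/

import Mathlib

open MeasureTheory

open Set

def simS (k : ℕ) : Set (Fin k → ℝ) := {x | (∀ i, 0 ≤ x i) ∧ ∑ i, x i ≤ 1}

lemma simS_closed (k : ℕ) : IsClosed (simS k) := by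
  have h1 : IsClosed {x : Fin k → ℝ | ∀ i, 0 ≤ x i} := by
    rw [Set.setOf_forall]
    exact isClosed_iInter fun i => isClosed_le continuous_const (continuous_apply i)
  have h2 : IsClosed {x : Fin k → ℝ | ∑ i, x i ≤ 1} :=
    isClosed_le (continuous_finset_sum _ fun i _ => continuous_apply i) continuous_const
  exact h1.inter h2

lemma simS_compact (k : ℕ) : IsCompact (simS k) := by
  refine IsCompact.of_isClosed_subset (isCompact_univ_pi fun _ : Fin k => isCompact_Icc (a := (0:ℝ)) (b := 1)) (simS_closed k) ?_
  rintro x ⟨h1, h2⟩ i -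
  refine ⟨h1 i, ?_⟩
  calc x i ≤ ∑ j, x j := Finset.single_le_sum (fun j _ => h1 j) (Finset.mem_univ i)
    _ ≤ 1 := h2

lemma simS_measurable (k : ℕ) : MeasurableSet (simS k) := (simS_closed k).measurableSet

lemma contF (k : ℕ) (e : Fin k → ℕ) (b : ℕ) :
    Continuous fun x : Fin k → ℝ => (∏ i, x i ^ e i) * (1 - ∑ i, x i) ^ b := by
  fun_prop

lemma integrableG (k : ℕ) (e : Fin k → ℕ) (b : ℕ) :
    Integrable ((simS k).indicator fun x : Fin k → ℝ => (∏ i, x i ^ e i) * (1 - ∑ i, x i) ^ b) := by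
  refine (IntegrableOn.integrable_indicator ?_ (simS_measurable k))
  exact ((contF k e b).continuousOn).integrableOn_compact (simS_compact k)

lemma beta_nat (a b : ℕ) : ∫ x in (0:ℝ)..1, x ^ a * (1 - x) ^ b
    = (a.factorial * b.factorial : ℝ) / ((a + b + 1).factorial) := by
  induction b generalizing a with
  | zero =>
    simp only [pow_zero, mul_one, integral_pow, Nat.factorial_zero, Nat.cast_one,
      Nat.add_zero]
    rw [Nat.factorial_succ]
    push_cast
    rw [one_pow, zero_pow (by omega)]
    field_simp
    norm_num
  | succ b ih =>
    have hc1 : Continuous fun x : ℝ => (a+1:ℝ) * (x^a * (1-x)^(b+1)) := by fun_prop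
    have hc2 : Continuous fun x : ℝ => (b+1:ℝ) * (x^(a+1) * (1-x)^b) := by fun_prop
    have key : (∫ x in (0:ℝ)..1, ((a+1:ℝ) * (x^a * (1-x)^(b+1)) - (b+1:ℝ) * (x^(a+1) * (1-x)^b))) = 0 := by
      rw [intervalIntegral.integral_eq_sub_of_hasDerivAt
        (f := fun x : ℝ => x^(a+1) * (1-x)^(b+1))
        (f' := fun x : ℝ => (a+1:ℝ) * (x^a * (1-x)^(b+1)) - (b+1:ℝ) * (x^(a+1) * (1-x)^b))
        (fun x _ => by
          have h1 : HasDerivAt (fun x : ℝ => x^(a+1)) ((a+1:ℝ) * x^a) x := by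
            simpa using hasDerivAt_pow (a+1) x
          have h2 : HasDerivAt (fun x : ℝ => (1-x)^(b+1)) (((b+1:ℝ) * (1-x)^b) * (0 - 1)) x := by
            exact (hasDerivAt_pow (b+1) (1-x)).comp x (by simpa using (hasDerivAt_id x).const_sub (1:ℝ)) |>.congr_deriv (by push_cast; ring)
          have := h1.fun_mul h2
          exact this.congr_deriv (by ring))
        ((hc1.sub hc2).intervalIntegrable 0 1)]
      simp [zero_pow (Nat.succ_ne_zero a)]
    rw [intervalIntegral.integral_sub (hc1.intervalIntegrable 0 1) (hc2.intervalIntegrable 0 1),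
      intervalIntegral.integral_const_mul, intervalIntegral.integral_const_mul, sub_eq_zero] at key
    have ha : ((a:ℝ)+1) ≠ 0 := by positivity
    have := ih (a+1)
    have heq : (∫ x in (0:ℝ)..1, x ^ a * (1 - x) ^ (b+1)) = ((b:ℝ)+1)/((a:ℝ)+1) * ∫ x in (0:ℝ)..1, x ^ (a+1) * (1 - x) ^ b := by
      field_simp
      linarith [key]
    rw [heq, this]
    have e1 : a + 1 + b + 1 = a + (b+1) + 1 := by ring
    rw [e1, Nat.factorial_succ (a), Nat.factorial_succ b]
    push_cast
    field_simp

lemma aux_main (k : ℕ) : ∀ m : Fin (k+1) → ℕ,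
    (∫ x in simS k, (∏ i : Fin k, x i ^ m i.castSucc) * (1 - ∑ i, x i) ^ m (Fin.last k))
      = (∏ i, ((m i).factorial : ℝ)) / (((∑ i, m i) + k).factorial : ℝ) := by
  induction k with
  | zero =>
    intro m
    have hS : simS 0 = Set.univ := by ext x; simp [simS]
    rw [hS, Measure.restrict_univ]
    simp only [Finset.univ_eq_empty, Finset.prod_empty, Finset.sum_empty, sub_zero, one_pow,
      one_mul, integral_const, smul_eq_mul, mul_one]
    rw [measureReal_def, show (volume : Measure (Fin 0 → ℝ)) Set.univ = 1 by
      rw [volume_pi, Measure.pi_univ]; simp]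
    simp only [ENNReal.toReal_one]
    rw [Fin.prod_univ_succ, Fin.sum_univ_succ]
    simp only [Finset.univ_eq_empty, Finset.prod_empty, Finset.sum_empty, mul_one, add_zero,
      Nat.add_zero]
    rw [div_self (by exact_mod_cast (Nat.factorial_pos _).ne')]
  | succ k ih =>
    intro m
    set m' : Fin (k+1) → ℕ := fun j => m j.succ with hm'
    set M : ℕ := ∑ j, m' j with hM
    set F : (Fin (k+1) → ℝ) → ℝ :=
      fun x => (∏ i : Fin (k+1), x i ^ m i.castSucc) * (1 - ∑ i, x i) ^ m (Fin.last (k+1)) with hF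
    set G : (Fin (k+1) → ℝ) → ℝ := (simS (k+1)).indicator F with hG
    set F' : (Fin k → ℝ) → ℝ :=
      fun z => (∏ i : Fin k, z i ^ m' i.castSucc) * (1 - ∑ i, z i) ^ m' (Fin.last k) with hF'
    set G' : (Fin k → ℝ) → ℝ := (simS k).indicator F' with hG'
    have hGint : Integrable G := integrableG _ _ _
    -- membership lemma
    have hmemc : ∀ (t : ℝ) (y : Fin k → ℝ),
        (Fin.cons t y ∈ simS (k+1)) ↔ (0 ≤ t ∧ (∀ i, 0 ≤ y i) ∧ t + ∑ i, y i ≤ 1) := by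
      intro t y
      simp only [simS, Set.mem_setOf_eq, Fin.forall_fin_succ, Fin.cons_zero, Fin.cons_succ,
        Fin.sum_univ_succ]
      tauto
    -- vanishing outside [0,1]
    have houter : ∀ t : ℝ, t ∉ Set.Icc (0:ℝ) 1 → ∀ y : Fin k → ℝ, G (Fin.cons t y) = 0 := by
      intro t ht y
      rw [hG, Set.indicator_of_notMem]
      rw [hmemc]
      rintro ⟨h0, hy, hs⟩
      refine ht ⟨h0, ?_⟩
      have : 0 ≤ ∑ i, y i := Finset.sum_nonneg fun i _ => hy i
      linarith
    -- the key pointwise scaling identity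
    have hpt : ∀ t : ℝ, t ∈ Set.Ioo (0:ℝ) 1 → ∀ z : Fin k → ℝ,
        G (Fin.cons t ((1 - t) • z)) = t ^ m 0 * (1 - t) ^ M * G' z := by
      intro t ht z
      have hc : (0:ℝ) < 1 - t := by linarith [ht.2]
      have hmem : (Fin.cons t ((1 - t) • z) ∈ simS (k+1)) ↔ z ∈ simS k := by
        rw [hmemc]
        simp only [Pi.smul_apply, smul_eq_mul, simS, Set.mem_setOf_eq]
        constructor
        · rintro ⟨-, hy, hs⟩
          refine ⟨fun i => nonneg_of_mul_nonneg_right ?_ hc, ?_⟩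
          · exact hy i
          · rw [← Finset.mul_sum] at hs
            nlinarith [hs]
        · rintro ⟨hz, hs⟩
          refine ⟨ht.1.le, fun i => mul_nonneg hc.le (hz i), ?_⟩
          rw [← Finset.mul_sum]
          nlinarith [hs]
      have hval : F (Fin.cons t ((1 - t) • z)) = t ^ m 0 * (1 - t) ^ M * F' z := by
        simp only [hF, hF']
        rw [Fin.prod_univ_succ]
        simp only [Fin.cons_zero, Fin.cons_succ, Pi.smul_apply, smul_eq_mul, Fin.sum_univ_succ,
          Fin.castSucc_zero]
        have h1 : ∀ i : Fin k, m (Fin.castSucc (Fin.succ i)) = m' (Fin.castSucc i) := by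
          intro i; exact (congrArg m (Fin.succ_castSucc i)).symm
        have h2 : m (Fin.last (k+1)) = m' (Fin.last k) := by
          exact (congrArg m (Fin.succ_last k)).symm
        simp only [h1, h2]
        have h3 : (∏ i : Fin k, ((1 - t) * z i) ^ m' (Fin.castSucc i))
            = (1 - t) ^ (∑ i : Fin k, m' (Fin.castSucc i)) * ∏ i : Fin k, z i ^ m' (Fin.castSucc i) := by
          rw [← Finset.prod_pow_eq_pow_sum, ← Finset.prod_mul_distrib]
          exact Finset.prod_congr rfl fun i _ => mul_pow _ _ _
        have h4 : (1 : ℝ) - (t + ∑ i : Fin k, (1 - t) * z i) = (1 - t) * (1 - ∑ i, z i) := by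
          rw [← Finset.mul_sum]; ring
        rw [h3, h4, mul_pow]
        have h5 : (∑ i : Fin k, m' (Fin.castSucc i)) + m' (Fin.last k) = M := by
          rw [hM, Fin.sum_univ_castSucc]
        rw [← h5, pow_add]
        ring
      by_cases hz : z ∈ simS k
      · rw [hG, Set.indicator_of_mem (hmem.mpr hz), hG', Set.indicator_of_mem hz, hval]
      · rw [hG, Set.indicator_of_notMem (fun h => hz (hmem.mp h)), hG',
          Set.indicator_of_notMem hz, mul_zero]
    -- inner integral
    have hinner : ∀ t : ℝ, t ∈ Set.Ioo (0:ℝ) 1 →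
        (∫ y : Fin k → ℝ, G (Fin.cons t y))
          = t ^ m 0 * (1 - t) ^ (M + k) * ∫ z, G' z := by
      intro t ht
      have hc : (0:ℝ) < 1 - t := by linarith [ht.2]
      have hscale := Measure.integral_comp_smul_of_nonneg (μ := volume)
        (fun y : Fin k → ℝ => G (Fin.cons t y)) (1 - t) (hR := hc.le)
      have hd : Module.finrank ℝ (Fin k → ℝ) = k := by
        simp [Module.finrank_pi]
      rw [hd] at hscale
      simp only [hpt t ht] at hscale
      rw [integral_const_mul] at hscale
      have h6 : ((1 - t) ^ k) • (t ^ m 0 * (1 - t) ^ M * ∫ a, G' a)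
          = ∫ y : Fin k → ℝ, G (Fin.cons t y) := by
        rw [hscale, smul_smul, mul_inv_cancel₀ (by positivity), one_smul]
      rw [← h6, smul_eq_mul, pow_add]
      ring
    -- main computation
    rw [← integral_indicator (simS_measurable (k+1)), ← hG]
    have hmp := (volume_preserving_piFinSuccAbove (fun _ : Fin (k+1) => ℝ) 0).symm
    have hcons : ∀ z : ℝ × (Fin k → ℝ),
        (MeasurableEquiv.piFinSuccAbove (fun _ : Fin (k+1) => ℝ) 0).symm z
          = Fin.cons z.1 z.2 := by
      intro z
      simp [MeasurableEquiv.piFinSuccAbove, Fin.insertNthEquiv, Fin.insertNth_zero]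
    have hstep2 : (∫ z : ℝ × (Fin k → ℝ), G (Fin.cons z.1 z.2)) = ∫ x, G x := by
      rw [← hmp.integral_comp (MeasurableEquiv.measurableEmbedding _) G]
      exact integral_congr_ae (Filter.Eventually.of_forall fun z => by simp only [hcons])
    rw [← hstep2]
    have hintc : Integrable (fun z : ℝ × (Fin k → ℝ) => G (Fin.cons z.1 z.2)) := by
      have := (hmp.integrable_comp_emb (MeasurableEquiv.measurableEmbedding _)).mpr hGint
      refine this.congr (Filter.Eventually.of_forall fun z => ?_)
      simp only [Function.comp_apply, hcons z]
    rw [Measure.volume_eq_prod] at hintc ⊢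
    rw [integral_prod _ hintc]
    -- now the outer integral
    have h01 : (volume ({0, 1} : Set ℝ)) = 0 := by
      refine measure_union_null (measure_singleton _) (measure_singleton _)
    have hae : (fun t : ℝ => ∫ y : Fin k → ℝ, G (Fin.cons t y))
        =ᵐ[volume] (Set.Ioo (0:ℝ) 1).indicator
            (fun t => t ^ m 0 * (1 - t) ^ (M + k) * ∫ z, G' z) := by
      filter_upwards [compl_mem_ae_iff.2 h01] with t ht
      by_cases hIoo : t ∈ Set.Ioo (0:ℝ) 1
      · rw [hinner t hIoo, Set.indicator_of_mem hIoo]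
      · rw [Set.indicator_of_notMem hIoo]
        have hIcc : t ∉ Set.Icc (0:ℝ) 1 := by
          simp only [Set.mem_compl_iff, Set.mem_insert_iff, Set.mem_singleton_iff, not_or] at ht
          simp only [Set.mem_Ioo, not_and_or, not_lt] at hIoo
          simp only [Set.mem_Icc, not_and_or, not_le]
          rcases hIoo with h | h
          · exact Or.inl (lt_of_le_of_ne h ht.1)
          · exact Or.inr (lt_of_le_of_ne h fun he => ht.2 he.symm)
        simp only [houter t hIcc, integral_zero]
    rw [integral_congr_ae hae, integral_indicator measurableSet_Ioo,
      ← MeasureTheory.integral_Ioc_eq_integral_Ioo,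
      ← intervalIntegral.integral_of_le (zero_le_one)]
    rw [intervalIntegral.integral_mul_const, beta_nat]
    have hihm : (∫ z, G' z) = (∏ i, ((m' i).factorial : ℝ)) / ((M + k).factorial : ℝ) := by
      rw [hG', integral_indicator (simS_measurable k)]
      exact ih m'
    rw [hihm]
    -- arithmetic
    have hprod : (∏ i : Fin (k+2), ((m i).factorial : ℝ))
        = ((m 0).factorial : ℝ) * ∏ j : Fin (k+1), ((m' j).factorial : ℝ) := by
      rw [Fin.prod_univ_succ]
    have hsum : (∑ i : Fin (k+2), m i) = m 0 + M := by
      rw [hM, Fin.sum_univ_succ]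
    rw [hprod, hsum]
    have hexp : m 0 + M + (k+1) = m 0 + (M + k) + 1 := by omega
    rw [hexp]
    have hMk : ((M + k).factorial : ℝ) ≠ 0 := by exact_mod_cast (Nat.factorial_pos _).ne'
    have htot : ((m 0 + (M + k) + 1).factorial : ℝ) ≠ 0 := by
      exact_mod_cast (Nat.factorial_pos _).ne'
    field_simp

/-- For `n ≥ 2` and nonnegative integers `m₁,…,mₙ`, the (Lebesgue) integral of
`x₁^{m₁} ⋯ x_{n−1}^{m_{n−1}} (1 − x₁ − ⋯ − x_{n−1})^{mₙ}` over the region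
`{x ∈ ℝ^{n−1} : xᵢ ≥ 0, Σᵢ xᵢ ≤ 1}` equals `m₁!⋯mₙ!/(m₁+⋯+mₙ+n−1)!`. -/
theorem integral_monomial_simplex
    (n : ℕ) (hn : 2 ≤ n) (m : Fin n → ℕ) :
    (∫ x in {x : Fin (n - 1) → ℝ | (∀ i, 0 ≤ x i) ∧ ∑ i, x i ≤ 1},
        (∏ i : Fin (n - 1), x i ^ m (Fin.castLE (by omega) i)) *
          (1 - ∑ i, x i) ^ m ⟨n - 1, by omega⟩)
      = (∏ i, (Nat.factorial (m i) : ℝ)) /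
          (Nat.factorial ((∑ i, m i) + n - 1) : ℝ) := by
  obtain ⟨k, rfl⟩ : ∃ k, n = k + 1 := ⟨n - 1, by omega⟩
  exact aux_main k m
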